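/- For all integers m ≥ 1 and all x, y: Σ_{k=0}^{2m-1} (-1/2)^{k+1} C(2m+1, k) (x^{2m+1-k} + y^{2m+1-k})(x+y)^k = (m / 2^{2m}) (x+y)^{2m+1}. -/

import Mathlib

open Finset

private lemma key {A : Type*} [CommRing A] [Algebra ℚ A] (n : ℕ) (hn : Odd n) (x y : A) :
    ∑ k ∈ Finset.range (n+1),
      (((-1/2 : ℚ) ^ k * (n.choose k : ℚ)) • ((x ^ (n-k) + y ^ (n-k)) * (x+y) ^ k)) = 0 := by
  have hsplit : ∀ k, ((-1/2 : ℚ) ^ k * (n.choose k : ℚ)) • ((x ^ (n-k) + y ^ (n-k)) * (x+y) ^ k)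
      = ((-1/2 : ℚ) • (x+y)) ^ k * x ^ (n-k) * (n.choose k : A)
        + ((-1/2 : ℚ) • (x+y)) ^ k * y ^ (n-k) * (n.choose k : A) := by
    intro k
    rw [smul_pow]
    simp only [Algebra.smul_def, ← map_natCast (algebraMap ℚ A) (n.choose k), map_mul, map_pow]
    ring
  rw [Finset.sum_congr rfl fun k _ => hsplit k, Finset.sum_add_distrib, ← add_pow, ← add_pow]
  have h1 : (-1/2 : ℚ) • (x+y) + x = (1/2 : ℚ) • (x - y) := by module
  have h2 : (-1/2 : ℚ) • (x+y) + y = -((1/2 : ℚ) • (x - y)) := by module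
  rw [h1, h2, hn.neg_pow, add_neg_cancel]

/-- The first Girard–Waring type identity. -/
theorem girard_waring_odd {A : Type*} [CommRing A] [Algebra ℚ A]
    (m : ℕ) (hm : 1 ≤ m) (x y : A) :
    ∑ k ∈ Finset.range (2 * m),
      (((-1 / 2 : ℚ) ^ (k + 1) * ((2 * m + 1).choose k : ℚ)) •
        ((x ^ (2 * m + 1 - k) + y ^ (2 * m + 1 - k)) * (x + y) ^ k))
    = ((m : ℚ) / 2 ^ (2 * m)) • (x + y) ^ (2 * m + 1) := by
  have hfull := key (2*m+1) (odd_two_mul_add_one m) x y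
  rw [Finset.sum_range_succ, Finset.sum_range_succ, add_assoc] at hfull
  have hS0 := eq_neg_of_add_eq_zero_left hfull
  have heq : ∀ k, ((-1 / 2 : ℚ) ^ (k + 1) * ((2 * m + 1).choose k : ℚ)) •
        ((x ^ (2 * m + 1 - k) + y ^ (2 * m + 1 - k)) * (x + y) ^ k)
      = (-1/2 : ℚ) • (((-1/2 : ℚ) ^ k * ((2 * m + 1).choose k : ℚ)) •
        ((x ^ (2 * m + 1 - k) + y ^ (2 * m + 1 - k)) * (x + y) ^ k)) := by
    intro k
    rw [smul_smul, pow_succ]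
    ring_nf
  rw [Finset.sum_congr rfl fun k _ => heq k, ← Finset.smul_sum, hS0]
  have c1 : ((2 * m + 1).choose (2 * m) : ℚ) = 2 * m + 1 := by
    rw [Nat.choose_succ_self_right]; push_cast; ring
  have e1 : 2 * m + 1 - 2 * m = 1 := by omega
  have e2 : 2 * m + 1 - (2 * m + 1) = 0 := by omega
  have c2 : ((2 * m + 1).choose (2 * m + 1) : ℚ) = 1 := by simp
  simp only [e1, e2, c1, c2, pow_one, pow_zero, mul_one]
  have hxy : (x + y) * (x + y) ^ (2 * m) = (x + y) ^ (2 * m + 1) := by ring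
  have h11 : ((1:A) + 1) * (x + y) ^ (2 * m + 1) = (2 : ℚ) • (x + y) ^ (2 * m + 1) := by
    rw [two_smul]; ring
  rw [hxy, h11]
  have hp : ((-1/2 : ℚ)) ^ (2 * m) = (1/2 : ℚ) ^ (2 * m) := by
    rw [show ((-1/2 : ℚ)) = -(1/2) by norm_num, Even.neg_pow (even_two_mul m)]
  rw [pow_succ, hp]
  match_scalars
  field_simp
  have h2m : (-1/2 : ℚ) ^ (m*2) = (1/2)^(m*2) := by rw [mul_comm]; exact hp
  have hh : (1/2 : ℚ) ^ (m*2) * 2 ^ (m*2) = 1 := by rw [← mul_pow]; norm_num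
  linear_combination (2 * (m:ℚ)) * hh - (2:ℚ) ^ (m*2) * h2m
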